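/- For Markovian SIR dynamics with infection rate τ = 1 and recovery rate γ = 1 on the closed triangle, started from the pure initial configuration (I, S, S), Kirkwood's closure fails to be exact: there exist t > 0 and A, B, C ∈ Fin 3 such that P_{123}(A,B,C;t) · P_1(A;t) · P_2(B;t) · P_3(C;t) ≠ P_{12}(A,B;t) · P_{23}(B,C;t) · P_{13}(A,C;t). -/

import Mathlib

open Finset

/-- Rate of a single off-diagonal transition for the Markovian SIR model with states
`0 = S`, `1 = I`, `2 = R`: nonzero only if `y` agrees with `x` except at exactly one node `i`,
where either `S → I` (rate `τ · #infectious neighbours`) or `I → R` (rate `γ`). -/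
noncomputable def sirRate {V : Type*} [Fintype V] [DecidableEq V] (G : SimpleGraph V)
    [DecidableRel G.Adj] (τ γ : ℝ) (x y : V → Fin 3) : ℝ :=
  ∑ i : V,
    ((if (∀ j, j ≠ i → x j = y j) ∧ x i = 0 ∧ y i = 1 then
        τ * ((Finset.univ.filter (fun j => G.Adj i j ∧ x j = 1)).card : ℝ) else 0)
      + (if (∀ j, j ≠ i → x j = y j) ∧ x i = 1 ∧ y i = 2 then γ else 0))

/-- Generator matrix of the Markovian SIR dynamics on configurations `V → Fin 3`. -/
noncomputable def sirGen {V : Type*} [Fintype V] [DecidableEq V] (G : SimpleGraph V)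
    [DecidableRel G.Adj] (τ γ : ℝ) : Matrix (V → Fin 3) (V → Fin 3) ℝ :=
  fun x y => if x = y then -∑ z ∈ Finset.univ.erase x, sirRate G τ γ x z
             else sirRate G τ γ x y

/-- Distribution at time `t` started from the pure configuration `x0`. -/
noncomputable def sirP {V : Type*} [Fintype V] [DecidableEq V] (G : SimpleGraph V)
    [DecidableRel G.Adj] (τ γ : ℝ) (x0 : V → Fin 3) (t : ℝ) (x : V → Fin 3) : ℝ :=
  NormedSpace.exp (t • sirGen G τ γ) x0 x

/-- Single-node marginal `P_i(A;t)`. -/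
noncomputable def sirP1 {V : Type*} [Fintype V] [DecidableEq V] (G : SimpleGraph V)
    [DecidableRel G.Adj] (τ γ : ℝ) (x0 : V → Fin 3) (i : V) (A : Fin 3) (t : ℝ) : ℝ :=
  ∑ x ∈ Finset.univ.filter (fun x : V → Fin 3 => x i = A), sirP G τ γ x0 t x

/-- Pair marginal `P_{ij}(A,B;t)`. -/
noncomputable def sirP2 {V : Type*} [Fintype V] [DecidableEq V] (G : SimpleGraph V)
    [DecidableRel G.Adj] (τ γ : ℝ) (x0 : V → Fin 3) (i j : V) (A B : Fin 3) (t : ℝ) : ℝ :=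
  ∑ x ∈ Finset.univ.filter (fun x : V → Fin 3 => x i = A ∧ x j = B), sirP G τ γ x0 t x

/-- Triple marginal `P_{ijk}(A,B,C;t)`. -/
noncomputable def sirP3 {V : Type*} [Fintype V] [DecidableEq V] (G : SimpleGraph V)
    [DecidableRel G.Adj] (τ γ : ℝ) (x0 : V → Fin 3) (i j k : V) (A B C : Fin 3) (t : ℝ) : ℝ :=
  ∑ x ∈ Finset.univ.filter (fun x : V → Fin 3 => x i = A ∧ x j = B ∧ x k = C),
    sirP G τ γ x0 t x


/-- The closed triangle: the complete graph on nodes `{0,1,2}` (representing `1,2,3`). -/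
def triangle : SimpleGraph (Fin 3) := ⊤

instance : DecidableRel triangle.Adj :=
  fun i j => inferInstanceAs (Decidable (i ≠ j))

namespace SIRAux

abbrev S := Fin 3 → Fin 3

def rateN (x y : S) : ℕ :=
  ∑ i : Fin 3,
    ((if (∀ j, j ≠ i → x j = y j) ∧ x i = 0 ∧ y i = 1 then
        (Finset.univ.filter (fun j => triangle.Adj i j ∧ x j = 1)).card else 0)
      + (if (∀ j, j ≠ i → x j = y j) ∧ x i = 1 ∧ y i = 2 then 1 else 0))

lemma rate_eq (x y : S) : sirRate triangle 1 1 x y = (rateN x y : ℝ) := by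
  unfold sirRate rateN
  push_cast
  simp
  try rfl
  try congr!

def QZ : Matrix S S ℤ := Matrix.of fun x y =>
  if x = y then -∑ z ∈ Finset.univ.erase x, (rateN x z : ℤ) else (rateN x y : ℤ)

lemma gen_eq : sirGen triangle 1 1 = QZ.map (Int.cast : ℤ → ℝ) := by
  funext x y
  simp only [sirGen, QZ, Matrix.map_apply, Matrix.of_apply, rate_eq]
  split_ifs with h <;> push_cast <;> ring

end SIRAux
namespace SIRAux
set_option maxRecDepth 100000

def x₀ : S := ![1, 0, 0]

def w : ℕ → S → ℤ
  | 0 => fun y => if x₀ = y then 1 else 0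
  | n + 1 => fun y => ∑ z : S, w n z * QZ z y

lemma pow_row (n : ℕ) (y : S) : (QZ ^ n) x₀ y = w n y := by
  induction n generalizing y with
  | zero => simp [Matrix.one_apply, w]
  | succ n ih =>
    rw [pow_succ, Matrix.mul_apply, w]
    exact Finset.sum_congr rfl fun z _ => by rw [ih]

lemma QZ_bound : ∀ x y : S, |QZ x y| ≤ 4 := by decide

lemma card_S : (Finset.univ : Finset S).card = 27 := by decide

lemma pow_bound : ∀ (n : ℕ) (x y : S), |(QZ ^ n) x y| ≤ 108 ^ n := by
  intro n
  induction n with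
  | zero =>
    intro x y
    simp only [pow_zero, Matrix.one_apply]
    split <;> simp
  | succ n ih =>
    intro x y
    rw [pow_succ, Matrix.mul_apply]
    calc |∑ z : S, (QZ ^ n) x z * QZ z y| ≤ ∑ z : S, |(QZ ^ n) x z * QZ z y| :=
          Finset.abs_sum_le_sum_abs _ _
      _ ≤ ∑ _z : S, 108 ^ n * 4 := Finset.sum_le_sum fun z _ => by
          rw [abs_mul]
          exact mul_le_mul (ih x z) (QZ_bound z y) (abs_nonneg _)
            (pow_nonneg (by norm_num) _)
      _ = 108 ^ (n + 1) := by rw [Finset.sum_const, card_S]; ring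

def t1 : Fin 3 → Fin 3 → Fin 3 → ℤ := ![![![0, 0, 0], ![0, 0, 0], ![0, 0, 0]], ![![-3, 1, 0], ![1, 0, 0], ![0, 0, 0]], ![![1, 0, 0], ![0, 0, 0], ![0, 0, 0]]]
def t2 : Fin 3 → Fin 3 → Fin 3 → ℤ := ![![![0, 0, 0], ![0, 0, 0], ![0, 0, 0]], ![![9, -7, 1], ![-7, 4, 0], ![1, 0, 0]], ![![-3, 1, 0], ![1, 0, 0], ![0, 0, 0]]]
def t3 : Fin 3 → Fin 3 → Fin 3 → ℤ := ![![![0, 0, 0], ![0, 0, 0], ![0, 0, 0]], ![![-27, 37, -9], ![37, -40, 5], ![-9, 5, 0]], ![![9, -9, 2], ![-9, 6, 0], ![2, 0, 0]]]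
def t4 : Fin 3 → Fin 3 → Fin 3 → ℤ := ![![![0, 0, 0], ![0, 0, 0], ![0, 0, 0]], ![![81, -175, 55], ![-175, 268, -59], ![55, -59, 10]], ![![-27, 55, -18], ![55, -70, 11], ![-18, 11, 0]]]

lemma w1_eq : ∀ y : S, w 1 y = t1 (y 0) (y 1) (y 2) := by decide

lemma step_eq {n : ℕ} {ta tb : Fin 3 → Fin 3 → Fin 3 → ℤ}
    (ha : ∀ y : S, w n y = ta (y 0) (y 1) (y 2))
    (hb : ∀ y : S, (∑ z : S, ta (z 0) (z 1) (z 2) * QZ z y) = tb (y 0) (y 1) (y 2)) :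
    ∀ y : S, w (n + 1) y = tb (y 0) (y 1) (y 2) := by
  intro y
  rw [← hb y, w]
  exact Finset.sum_congr rfl fun z _ => by rw [ha z]

lemma w2_eq : ∀ y : S, w 2 y = t2 (y 0) (y 1) (y 2) :=
  step_eq w1_eq (by decide)

lemma w3_eq : ∀ y : S, w 3 y = t3 (y 0) (y 1) (y 2) :=
  step_eq w2_eq (by decide)

lemma w4_eq : ∀ y : S, w 4 y = t4 (y 0) (y 1) (y 2) :=
  step_eq w3_eq (by decide)

end SIRAux
namespace SIRAux
open scoped Nat

lemma map_pow' (n : ℕ) :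
    (QZ.map (Int.cast : ℤ → ℝ)) ^ n = (QZ ^ n).map (Int.cast : ℤ → ℝ) := by
  have h : ∀ M : Matrix S S ℤ, M.map (Int.cast : ℤ → ℝ) = (Int.castRingHom ℝ).mapMatrix M :=
    fun M => rfl
  rw [h, h, ← map_pow]

lemma term_eq (t : ℝ) (n : ℕ) (a b : S) :
    ((n ! : ℝ)⁻¹ • (t • sirGen triangle 1 1) ^ n) a b
      = ((QZ ^ n) a b : ℝ) / (n ! : ℝ) * t ^ n := by
  rw [gen_eq, smul_pow, map_pow']
  simp only [Matrix.smul_apply, Matrix.map_apply, smul_eq_mul]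
  ring

lemma term_abs (t : ℝ) (n : ℕ) (a b : S) :
    |((n ! : ℝ)⁻¹ • (t • sirGen triangle 1 1) ^ n) a b| ≤ (108 * |t|) ^ n / (n ! : ℝ) := by
  rw [term_eq]
  have hb : |((QZ ^ n) a b : ℝ)| ≤ (108 : ℝ) ^ n := by
    calc |((QZ ^ n) a b : ℝ)| = ((|(QZ ^ n) a b| : ℤ) : ℝ) := Int.cast_abs.symm
      _ ≤ ((108 ^ n : ℤ) : ℝ) := Int.cast_le.mpr (pow_bound n a b)
      _ = (108 : ℝ) ^ n := by push_cast; ring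
  have h1 : |((QZ ^ n) a b : ℝ) / (n ! : ℝ) * t ^ n|
      = |((QZ ^ n) a b : ℝ)| * |t| ^ n / (n ! : ℝ) := by
    rw [abs_mul, abs_div, abs_pow, Nat.abs_cast]
    ring
  rw [h1, mul_pow]
  gcongr

lemma summable_term (t : ℝ) (a b : S) :
    Summable fun n : ℕ => ((n ! : ℝ)⁻¹ • (t • sirGen triangle 1 1) ^ n) a b := by
  apply Summable.of_abs
  apply Summable.of_nonneg_of_le (fun n => abs_nonneg _) (fun n => term_abs t n a b)
  exact Real.summable_pow_div_factorial (108 * |t|)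

lemma sirP_eq (t : ℝ) (x : S) :
    sirP triangle 1 1 ![1, 0, 0] t x = ∑' n : ℕ, ((w n x : ℝ) / (n ! : ℝ) * t ^ n) := by
  have h1 : Summable fun n : ℕ => (n ! : ℝ)⁻¹ • (t • sirGen triangle 1 1) ^ n :=
    Pi.summable.mpr fun a => Pi.summable.mpr fun b => summable_term t a b
  have h2 : Summable fun n : ℕ =>
      ((n ! : ℝ)⁻¹ • (t • sirGen triangle 1 1) ^ n) x₀ :=
    Pi.summable.mpr fun b => summable_term t x₀ b
  have he : NormedSpace.exp (t • sirGen triangle 1 1)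
      = ∑' n : ℕ, (n ! : ℝ)⁻¹ • (t • sirGen triangle 1 1) ^ n := by
    rw [NormedSpace.exp_eq_tsum ℝ]
  show NormedSpace.exp (t • sirGen triangle 1 1) x₀ x = _
  rw [he]
  erw [tsum_apply h1, tsum_apply h2]
  exact tsum_congr fun n => by rw [term_eq, pow_row]

end SIRAux
namespace SIRAux
open scoped Nat
set_option maxHeartbeats 1000000

lemma marg_eq (F : Finset S) (t : ℝ) :
    (∑ x ∈ F, sirP triangle 1 1 ![1, 0, 0] t x)
      = ∑' n : ℕ, ((∑ x ∈ F, (w n x : ℝ)) / (n ! : ℝ)) * t ^ n := by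
  have hs : ∀ x : S, Summable fun n : ℕ => (w n x : ℝ) / (n ! : ℝ) * t ^ n := fun x =>
    (summable_term t x₀ x).congr fun n => by rw [term_eq, pow_row]
  simp only [sirP_eq]
  rw [← Summable.tsum_finsetSum fun i _ => hs i]
  exact tsum_congr fun n => by rw [← Finset.sum_mul, ← Finset.sum_div]

lemma tail_exists (a : ℕ → ℝ) (C : ℝ) (h : ∀ n, |a n| ≤ C * 108 ^ n / (n ! : ℝ)) :
    ∃ D : ℝ, ∀ t : ℝ, |t| ≤ 1 →
      |(∑' n : ℕ, a n * t ^ n) - ∑ n ∈ Finset.range 5, a n * t ^ n| ≤ D * |t| ^ 5 := by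
  set u : ℕ → ℝ := fun n => C * 108 ^ n / (n ! : ℝ) with hu
  have hu_nonneg : ∀ n, 0 ≤ u n := fun n => le_trans (abs_nonneg _) (h n)
  have hu_sum : Summable u := by
    have h108 := Real.summable_pow_div_factorial 108
    have := h108.mul_left C
    apply this.congr
    intro n
    simp [hu, mul_div_assoc]
  refine ⟨∑' n, u (n + 5), fun t ht => ?_⟩
  have htpow : ∀ n : ℕ, |t| ^ n ≤ 1 := fun n => pow_le_one₀ (abs_nonneg t) ht
  have habs : ∀ n, |a n * t ^ n| ≤ u n := by
    intro n
    rw [abs_mul, abs_pow]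
    calc |a n| * |t| ^ n ≤ u n * 1 :=
          mul_le_mul (h n) (htpow n) (by positivity) (hu_nonneg n)
      _ = u n := mul_one _
  have habs_sum : Summable fun n => |a n * t ^ n| :=
    Summable.of_nonneg_of_le (fun n => abs_nonneg _) habs hu_sum
  have hsum : Summable fun n => a n * t ^ n := habs_sum.of_abs
  rw [← hsum.sum_add_tsum_nat_add 5, add_sub_cancel_left]
  have h1 : Summable fun n => |a (n + 5) * t ^ (n + 5)| :=
    (summable_nat_add_iff 5).mpr habs_sum
  have h2 : Summable fun n => u (n + 5) * |t| ^ 5 :=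
    ((summable_nat_add_iff 5).mpr hu_sum).mul_right _
  calc |∑' n : ℕ, a (n + 5) * t ^ (n + 5)| ≤ ∑' n : ℕ, |a (n + 5) * t ^ (n + 5)| := by
        have hnorm : Summable fun n : ℕ => ‖a (n + 5) * t ^ (n + 5)‖ := by
          simpa only [Real.norm_eq_abs] using h1
        have hle := norm_tsum_le_tsum_norm (f := fun n : ℕ => a (n + 5) * t ^ (n + 5)) hnorm
        simpa only [Real.norm_eq_abs] using hle
    _ ≤ ∑' n : ℕ, u (n + 5) * |t| ^ 5 := by
        refine Summable.tsum_le_tsum (fun n => ?_) h1 h2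
        rw [abs_mul, abs_pow, pow_add]
        calc |a (n + 5)| * (|t| ^ n * |t| ^ 5)
            ≤ u (n + 5) * (1 * |t| ^ 5) := by
              apply mul_le_mul (h (n + 5)) ?_ (by positivity) (hu_nonneg _)
              exact mul_le_mul_of_nonneg_right (htpow n) (by positivity)
          _ = u (n + 5) * |t| ^ 5 := by ring
    _ = (∑' n : ℕ, u (n + 5)) * |t| ^ 5 := tsum_mul_right

lemma marg_approx (F : Finset S) (c0 c1 c2 c3 c4 : ℤ)
    (h0 : ∑ x ∈ F, w 0 x = c0) (h1 : ∑ x ∈ F, w 1 x = c1) (h2 : ∑ x ∈ F, w 2 x = c2)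
    (h3 : ∑ x ∈ F, w 3 x = c3) (h4 : ∑ x ∈ F, w 4 x = c4) :
    ∃ D : ℝ, ∀ t : ℝ, |t| ≤ 1 →
      |(∑ x ∈ F, sirP triangle 1 1 ![1, 0, 0] t x)
        - ((c0 : ℝ) + (c1 : ℝ) * t + (c2 : ℝ) / 2 * t ^ 2 + (c3 : ℝ) / 6 * t ^ 3
            + (c4 : ℝ) / 24 * t ^ 4)| ≤ D * |t| ^ 5 := by
  have hb : ∀ n : ℕ, |(∑ x ∈ F, (w n x : ℝ)) / (n ! : ℝ)| ≤ 27 * 108 ^ n / (n ! : ℝ) := by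
    intro n
    have hentry : ∀ x : S, |(w n x : ℝ)| ≤ 108 ^ n := by
      intro x
      rw [← pow_row]
      calc |((QZ ^ n) x₀ x : ℝ)| = ((|(QZ ^ n) x₀ x| : ℤ) : ℝ) := Int.cast_abs.symm
        _ ≤ ((108 ^ n : ℤ) : ℝ) := Int.cast_le.mpr (pow_bound n x₀ x)
        _ = (108 : ℝ) ^ n := by push_cast; ring
    have hsum : |∑ x ∈ F, (w n x : ℝ)| ≤ 27 * 108 ^ n := by
      calc |∑ x ∈ F, (w n x : ℝ)| ≤ ∑ x ∈ F, |(w n x : ℝ)| := Finset.abs_sum_le_sum_abs _ _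
        _ ≤ ∑ _x ∈ F, (108 : ℝ) ^ n := Finset.sum_le_sum fun x _ => hentry x
        _ = F.card * 108 ^ n := by rw [Finset.sum_const]; ring
        _ ≤ 27 * 108 ^ n := by
            have hc : F.card ≤ 27 := le_trans (Finset.card_le_univ F) (le_of_eq card_S)
            have h27 : (F.card : ℝ) ≤ 27 := by exact_mod_cast hc
            have hp : (0:ℝ) ≤ 108 ^ n := by positivity
            nlinarith
    rw [abs_div, Nat.abs_cast]
    gcongr
  obtain ⟨D, hD⟩ := tail_exists (fun n => (∑ x ∈ F, (w n x : ℝ)) / (n ! : ℝ)) 27 hb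
  refine ⟨D, fun t ht => ?_⟩
  have key := hD t ht
  rw [marg_eq]
  have e0 := congrArg (fun z : ℤ => (z : ℝ)) h0
  have e1 := congrArg (fun z : ℤ => (z : ℝ)) h1
  have e2 := congrArg (fun z : ℤ => (z : ℝ)) h2
  have e3 := congrArg (fun z : ℤ => (z : ℝ)) h3
  have e4 := congrArg (fun z : ℤ => (z : ℝ)) h4
  push_cast at e0 e1 e2 e3 e4
  have hps : (∑ n ∈ Finset.range 5, (∑ x ∈ F, (w n x : ℝ)) / (n ! : ℝ) * t ^ n)
      = (c0 : ℝ) + (c1 : ℝ) * t + (c2 : ℝ) / 2 * t ^ 2 + (c3 : ℝ) / 6 * t ^ 3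
          + (c4 : ℝ) / 24 * t ^ 4 := by
    rw [Finset.sum_range_succ, Finset.sum_range_succ, Finset.sum_range_succ,
      Finset.sum_range_succ, Finset.sum_range_one]
    rw [e0, e1, e2, e3, e4]
    norm_num [Nat.factorial]
    try ring
  rw [← hps]
  exact key

end SIRAux
namespace SIRAux
open scoped Nat
open Asymptotics Filter Topology

noncomputable def pol (c0 c1 c2 c3 c4 : ℤ) : ℝ → ℝ := fun t =>
  (c0 : ℝ) + (c1 : ℝ) * t + (c2 : ℝ) / 2 * t ^ 2 + (c3 : ℝ) / 6 * t ^ 3 + (c4 : ℝ) / 24 * t ^ 4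

lemma sum_w_table (F : Finset S) {n : ℕ} {tab : Fin 3 → Fin 3 → Fin 3 → ℤ}
    (htab : ∀ y : S, w n y = tab (y 0) (y 1) (y 2)) {c : ℤ}
    (hc : ∑ x ∈ F, tab (x 0) (x 1) (x 2) = c) : ∑ x ∈ F, w n x = c := by
  rw [← hc]
  exact Finset.sum_congr rfl fun x _ => htab x

def F3 : Finset S := Finset.univ.filter (fun x : S => x 0 = 1 ∧ x 1 = 0 ∧ x 2 = 0)
def FA : Finset S := Finset.univ.filter (fun x : S => x 0 = 1)
def FB : Finset S := Finset.univ.filter (fun x : S => x 1 = 0)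
def FC : Finset S := Finset.univ.filter (fun x : S => x 2 = 0)
def FAB : Finset S := Finset.univ.filter (fun x : S => x 0 = 1 ∧ x 1 = 0)
def FBC : Finset S := Finset.univ.filter (fun x : S => x 1 = 0 ∧ x 2 = 0)
def FAC : Finset S := Finset.univ.filter (fun x : S => x 0 = 1 ∧ x 2 = 0)

lemma s3_0 : ∑ x ∈ F3, w 0 x = 1 := by decide
lemma sA_0 : ∑ x ∈ FA, w 0 x = 1 := by decide
lemma sB_0 : ∑ x ∈ FB, w 0 x = 1 := by decide
lemma sC_0 : ∑ x ∈ FC, w 0 x = 1 := by decide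
lemma sAB_0 : ∑ x ∈ FAB, w 0 x = 1 := by decide
lemma sBC_0 : ∑ x ∈ FBC, w 0 x = 1 := by decide
lemma sAC_0 : ∑ x ∈ FAC, w 0 x = 1 := by decide

lemma s3_1 : ∑ x ∈ F3, w 1 x = -3 := sum_w_table _ w1_eq (by decide)
lemma s3_2 : ∑ x ∈ F3, w 2 x = 9 := sum_w_table _ w2_eq (by decide)
lemma s3_3 : ∑ x ∈ F3, w 3 x = -27 := sum_w_table _ w3_eq (by decide)
lemma s3_4 : ∑ x ∈ F3, w 4 x = 81 := sum_w_table _ w4_eq (by decide)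

lemma sA_1 : ∑ x ∈ FA, w 1 x = -1 := sum_w_table _ w1_eq (by decide)
lemma sA_2 : ∑ x ∈ FA, w 2 x = 1 := sum_w_table _ w2_eq (by decide)
lemma sA_3 : ∑ x ∈ FA, w 3 x = -1 := sum_w_table _ w3_eq (by decide)
lemma sA_4 : ∑ x ∈ FA, w 4 x = 1 := sum_w_table _ w4_eq (by decide)

lemma sB_1 : ∑ x ∈ FB, w 1 x = -1 := sum_w_table _ w1_eq (by decide)
lemma sB_2 : ∑ x ∈ FB, w 2 x = 1 := sum_w_table _ w2_eq (by decide)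
lemma sB_3 : ∑ x ∈ FB, w 3 x = 3 := sum_w_table _ w3_eq (by decide)
lemma sB_4 : ∑ x ∈ FB, w 4 x = -29 := sum_w_table _ w4_eq (by decide)

lemma sC_1 : ∑ x ∈ FC, w 1 x = -1 := sum_w_table _ w1_eq (by decide)
lemma sC_2 : ∑ x ∈ FC, w 2 x = 1 := sum_w_table _ w2_eq (by decide)
lemma sC_3 : ∑ x ∈ FC, w 3 x = 3 := sum_w_table _ w3_eq (by decide)
lemma sC_4 : ∑ x ∈ FC, w 4 x = -29 := sum_w_table _ w4_eq (by decide)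

lemma sAB_1 : ∑ x ∈ FAB, w 1 x = -2 := sum_w_table _ w1_eq (by decide)
lemma sAB_2 : ∑ x ∈ FAB, w 2 x = 3 := sum_w_table _ w2_eq (by decide)
lemma sAB_3 : ∑ x ∈ FAB, w 3 x = 1 := sum_w_table _ w3_eq (by decide)
lemma sAB_4 : ∑ x ∈ FAB, w 4 x = -39 := sum_w_table _ w4_eq (by decide)

lemma sBC_1 : ∑ x ∈ FBC, w 1 x = -2 := sum_w_table _ w1_eq (by decide)
lemma sBC_2 : ∑ x ∈ FBC, w 2 x = 6 := sum_w_table _ w2_eq (by decide)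
lemma sBC_3 : ∑ x ∈ FBC, w 3 x = -18 := sum_w_table _ w3_eq (by decide)
lemma sBC_4 : ∑ x ∈ FBC, w 4 x = 54 := sum_w_table _ w4_eq (by decide)

lemma sAC_1 : ∑ x ∈ FAC, w 1 x = -2 := sum_w_table _ w1_eq (by decide)
lemma sAC_2 : ∑ x ∈ FAC, w 2 x = 3 := sum_w_table _ w2_eq (by decide)
lemma sAC_3 : ∑ x ∈ FAC, w 3 x = 1 := sum_w_table _ w3_eq (by decide)
lemma sAC_4 : ∑ x ∈ FAC, w 4 x = -39 := sum_w_table _ w4_eq (by decide)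

end SIRAux
namespace SIRAux
open Asymptotics Filter Topology

noncomputable def q : ℝ → ℝ := fun t =>
  -1/12 + 37/12*t - 713/72*t^2 + 55/3*t^3 - 13711/576*t^4 + 3059/144*t^5 - 6499/576*t^6
    - 5291/1728*t^7 + 85283/6912*t^8 - 26573/2304*t^9 + 221/48*t^10 - 1943/1536*t^11
    + 841/4096*t^12

lemma ppq (t : ℝ) :
    pol 1 (-3) 9 (-27) 81 t * pol 1 (-1) 1 (-1) 1 t * pol 1 (-1) 1 3 (-29) t
        * pol 1 (-1) 1 3 (-29) t
      - pol 1 (-2) 3 1 (-39) t * pol 1 (-2) 6 (-18) 54 t * pol 1 (-2) 3 1 (-39) t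
      = t ^ 4 * q t := by
  simp only [pol, q]
  push_cast
  ring

lemma isO_tail {g p : ℝ → ℝ} {D : ℝ} (h : ∀ t : ℝ, |t| ≤ 1 → |g t - p t| ≤ D * |t| ^ 5) :
    (fun t => g t - p t) =O[𝓝 (0 : ℝ)] fun t : ℝ => t ^ 5 := by
  rw [Asymptotics.isBigO_iff]
  refine ⟨D, ?_⟩
  have hev : ∀ᶠ t : ℝ in 𝓝 0, |t| ≤ 1 := by
    filter_upwards [Metric.closedBall_mem_nhds (0 : ℝ) one_pos] with t ht
    simpa [Real.dist_eq] using ht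
  filter_upwards [hev] with t ht
  simpa [Real.norm_eq_abs, abs_pow] using h t ht

lemma t5_O1 : (fun t : ℝ => t ^ 5) =O[𝓝 (0 : ℝ)] fun _ : ℝ => (1 : ℝ) :=
  ((continuous_pow 5).tendsto 0).isBigO_one ℝ

lemma pol_O1 (c0 c1 c2 c3 c4 : ℤ) :
    (pol c0 c1 c2 c3 c4) =O[𝓝 (0 : ℝ)] fun _ : ℝ => (1 : ℝ) := by
  have hc : Continuous (pol c0 c1 c2 c3 c4) := by unfold pol; fun_prop
  exact (hc.tendsto 0).isBigO_one ℝ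

lemma g_O1 {g p : ℝ → ℝ} (hp : p =O[𝓝 (0 : ℝ)] fun _ : ℝ => (1 : ℝ))
    (h : (fun t => g t - p t) =O[𝓝 (0 : ℝ)] fun t : ℝ => t ^ 5) :
    g =O[𝓝 (0 : ℝ)] fun _ : ℝ => (1 : ℝ) := by
  have hg : g = fun t => p t + (g t - p t) := by funext t; ring
  rw [hg]
  exact hp.add (h.trans t5_O1)

lemma O1_mul {g1 g2 : ℝ → ℝ} (h1 : g1 =O[𝓝 (0 : ℝ)] fun _ : ℝ => (1 : ℝ))
    (h2 : g2 =O[𝓝 (0 : ℝ)] fun _ : ℝ => (1 : ℝ)) :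
    (fun t => g1 t * g2 t) =O[𝓝 (0 : ℝ)] fun _ : ℝ => (1 : ℝ) := by
  have := h1.mul h2
  simpa using this

lemma mulO {g1 g2 p1 p2 : ℝ → ℝ}
    (h1 : (fun t => g1 t - p1 t) =O[𝓝 (0 : ℝ)] fun t : ℝ => t ^ 5)
    (h2 : (fun t => g2 t - p2 t) =O[𝓝 (0 : ℝ)] fun t : ℝ => t ^ 5)
    (b1 : g1 =O[𝓝 (0 : ℝ)] fun _ : ℝ => (1 : ℝ))
    (b2 : p2 =O[𝓝 (0 : ℝ)] fun _ : ℝ => (1 : ℝ)) :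
    (fun t => g1 t * g2 t - p1 t * p2 t) =O[𝓝 (0 : ℝ)] fun t : ℝ => t ^ 5 := by
  have key : (fun t => g1 t * g2 t - p1 t * p2 t)
      = fun t => g1 t * (g2 t - p2 t) + (g1 t - p1 t) * p2 t := by funext t; ring
  rw [key]
  have A := b1.mul h2
  have B := h1.mul b2
  have eA : (fun t : ℝ => (1 : ℝ) * t ^ 5) = fun t : ℝ => t ^ 5 := by funext t; ring
  have eB : (fun t : ℝ => t ^ 5 * (1 : ℝ)) = fun t : ℝ => t ^ 5 := by funext t; ring
  rw [eA] at A
  rw [eB] at B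
  exact A.add B

noncomputable def g3 : ℝ → ℝ := fun t => sirP3 triangle 1 1 ![1, 0, 0] 0 1 2 1 0 0 t
noncomputable def gA : ℝ → ℝ := fun t => sirP1 triangle 1 1 ![1, 0, 0] 0 1 t
noncomputable def gB : ℝ → ℝ := fun t => sirP1 triangle 1 1 ![1, 0, 0] 1 0 t
noncomputable def gC : ℝ → ℝ := fun t => sirP1 triangle 1 1 ![1, 0, 0] 2 0 t
noncomputable def gAB : ℝ → ℝ := fun t => sirP2 triangle 1 1 ![1, 0, 0] 0 1 1 0 t
noncomputable def gBC : ℝ → ℝ := fun t => sirP2 triangle 1 1 ![1, 0, 0] 1 2 0 0 t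
noncomputable def gAC : ℝ → ℝ := fun t => sirP2 triangle 1 1 ![1, 0, 0] 0 2 1 0 t

noncomputable def fdiff : ℝ → ℝ := fun t =>
  g3 t * gA t * gB t * gC t - gAB t * gBC t * gAC t

lemma main_aux : ∃ t : ℝ, 0 < t ∧ fdiff t ≠ 0 := by
  -- marginal approximations
  obtain ⟨D3, hD3⟩ := marg_approx F3 1 (-3) 9 (-27) 81 s3_0 s3_1 s3_2 s3_3 s3_4
  obtain ⟨DA, hDA⟩ := marg_approx FA 1 (-1) 1 (-1) 1 sA_0 sA_1 sA_2 sA_3 sA_4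
  obtain ⟨DB, hDB⟩ := marg_approx FB 1 (-1) 1 3 (-29) sB_0 sB_1 sB_2 sB_3 sB_4
  obtain ⟨DC, hDC⟩ := marg_approx FC 1 (-1) 1 3 (-29) sC_0 sC_1 sC_2 sC_3 sC_4
  obtain ⟨DAB, hDAB⟩ := marg_approx FAB 1 (-2) 3 1 (-39) sAB_0 sAB_1 sAB_2 sAB_3 sAB_4
  obtain ⟨DBC, hDBC⟩ := marg_approx FBC 1 (-2) 6 (-18) 54 sBC_0 sBC_1 sBC_2 sBC_3 sBC_4
  obtain ⟨DAC, hDAC⟩ := marg_approx FAC 1 (-2) 3 1 (-39) sAC_0 sAC_1 sAC_2 sAC_3 sAC_4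
  have o3 : (fun t => g3 t - pol 1 (-3) 9 (-27) 81 t) =O[𝓝 (0:ℝ)] fun t : ℝ => t ^ 5 :=
    isO_tail fun t ht => hD3 t ht
  have oA : (fun t => gA t - pol 1 (-1) 1 (-1) 1 t) =O[𝓝 (0:ℝ)] fun t : ℝ => t ^ 5 :=
    isO_tail fun t ht => hDA t ht
  have oB : (fun t => gB t - pol 1 (-1) 1 3 (-29) t) =O[𝓝 (0:ℝ)] fun t : ℝ => t ^ 5 :=
    isO_tail fun t ht => hDB t ht
  have oC : (fun t => gC t - pol 1 (-1) 1 3 (-29) t) =O[𝓝 (0:ℝ)] fun t : ℝ => t ^ 5 :=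
    isO_tail fun t ht => hDC t ht
  have oAB : (fun t => gAB t - pol 1 (-2) 3 1 (-39) t) =O[𝓝 (0:ℝ)] fun t : ℝ => t ^ 5 :=
    isO_tail fun t ht => hDAB t ht
  have oBC : (fun t => gBC t - pol 1 (-2) 6 (-18) 54 t) =O[𝓝 (0:ℝ)] fun t : ℝ => t ^ 5 :=
    isO_tail fun t ht => hDBC t ht
  have oAC : (fun t => gAC t - pol 1 (-2) 3 1 (-39) t) =O[𝓝 (0:ℝ)] fun t : ℝ => t ^ 5 :=
    isO_tail fun t ht => hDAC t ht
  -- O(1) facts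
  have b3 := g_O1 (pol_O1 1 (-3) 9 (-27) 81) o3
  have bA := g_O1 (pol_O1 1 (-1) 1 (-1) 1) oA
  have bB := g_O1 (pol_O1 1 (-1) 1 3 (-29)) oB
  have bAB := g_O1 (pol_O1 1 (-2) 3 1 (-39)) oAB
  have bBC := g_O1 (pol_O1 1 (-2) 6 (-18) 54) oBC
  -- build product big-O, left associated
  have m1 := mulO o3 oA b3 (pol_O1 1 (-1) 1 (-1) 1)
  have m2 := mulO m1 oB (O1_mul b3 bA) (pol_O1 1 (-1) 1 3 (-29))
  have m3 := mulO m2 oC (O1_mul (O1_mul b3 bA) bB) (pol_O1 1 (-1) 1 3 (-29))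
  have n1 := mulO oAB oBC bAB (pol_O1 1 (-2) 6 (-18) 54)
  have n2 := mulO n1 oAC (O1_mul bAB bBC) (pol_O1 1 (-2) 3 1 (-39))
  have hO : (fun t => fdiff t -
      (pol 1 (-3) 9 (-27) 81 t * pol 1 (-1) 1 (-1) 1 t * pol 1 (-1) 1 3 (-29) t
          * pol 1 (-1) 1 3 (-29) t
        - pol 1 (-2) 3 1 (-39) t * pol 1 (-2) 6 (-18) 54 t * pol 1 (-2) 3 1 (-39) t))
      =O[𝓝 (0:ℝ)] fun t : ℝ => t ^ 5 := by
    have := m3.sub n2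
    apply this.congr_left
    intro t
    simp only [fdiff]
    ring
  -- extract constant
  rw [Asymptotics.isBigO_iff] at hO
  obtain ⟨c, hc⟩ := hO
  -- limit of fdiff t / t^4 along 𝓝[>] 0
  have hlim0 : Tendsto (fun t : ℝ => (fdiff t - t ^ 4 * q t) / t ^ 4) (𝓝[>] (0:ℝ)) (𝓝 0) := by
    apply squeeze_zero_norm' (a := fun t : ℝ => c * |t|)
    · have hc' : ∀ᶠ t : ℝ in 𝓝[>] (0:ℝ),
          ‖fdiff t - (pol 1 (-3) 9 (-27) 81 t * pol 1 (-1) 1 (-1) 1 t * pol 1 (-1) 1 3 (-29) t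
            * pol 1 (-1) 1 3 (-29) t
          - pol 1 (-2) 3 1 (-39) t * pol 1 (-2) 6 (-18) 54 t * pol 1 (-2) 3 1 (-39) t)‖
          ≤ c * ‖t ^ 5‖ := nhdsWithin_le_nhds hc
      filter_upwards [hc', self_mem_nhdsWithin] with t hct (htpos : 0 < t)
      rw [← ppq t] at *
      have ht4 : (0:ℝ) < t ^ 4 := by positivity
      rw [Real.norm_eq_abs, abs_div, abs_of_pos ht4, div_le_iff₀ ht4]
      calc |fdiff t - (pol 1 (-3) 9 (-27) 81 t * pol 1 (-1) 1 (-1) 1 t * pol 1 (-1) 1 3 (-29) t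
            * pol 1 (-1) 1 3 (-29) t
          - pol 1 (-2) 3 1 (-39) t * pol 1 (-2) 6 (-18) 54 t * pol 1 (-2) 3 1 (-39) t)|
            ≤ c * |t ^ 5| := by simpa [Real.norm_eq_abs] using hct
        _ = c * |t| * t ^ 4 := by
            rw [abs_pow, abs_of_pos htpos]
            ring
    · have : Tendsto (fun t : ℝ => c * |t|) (𝓝 (0:ℝ)) (𝓝 (c * |(0:ℝ)|)) := by
        apply Tendsto.const_mul
        exact continuous_abs.tendsto 0
      simpa using this.mono_left nhdsWithin_le_nhds
  have hqlim : Tendsto q (𝓝[>] (0:ℝ)) (𝓝 (q 0)) := by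
    have hq : Continuous q := by unfold q; fun_prop
    exact (hq.tendsto 0).mono_left nhdsWithin_le_nhds
  have heq : ∀ᶠ t : ℝ in 𝓝[>] (0:ℝ),
      q t + (fdiff t - t ^ 4 * q t) / t ^ 4 = fdiff t / t ^ 4 := by
    filter_upwards [self_mem_nhdsWithin] with t (ht : 0 < t)
    have ht4 : (t:ℝ) ^ 4 ≠ 0 := by positivity
    field_simp
    ring
  have hlim : Tendsto (fun t : ℝ => fdiff t / t ^ 4) (𝓝[>] (0:ℝ)) (𝓝 (q 0 + 0)) :=
    Tendsto.congr' (by filter_upwards [heq] with t h using h) (hqlim.add hlim0)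
  have hq0 : q 0 + 0 ≠ 0 := by norm_num [q]
  have hne := hlim.eventually_ne hq0
  obtain ⟨t, htne, htpos⟩ := (hne.and self_mem_nhdsWithin).exists
  refine ⟨t, htpos, fun h0 => htne ?_⟩
  rw [h0]
  simp

end SIRAux
theorem sir_triangle_kirkwood_fails :
    ∃ (t : ℝ) (A B C : Fin 3), 0 < t ∧
      sirP3 triangle 1 1 ![1, 0, 0] 0 1 2 A B C t * sirP1 triangle 1 1 ![1, 0, 0] 0 A t
          * sirP1 triangle 1 1 ![1, 0, 0] 1 B t * sirP1 triangle 1 1 ![1, 0, 0] 2 C t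
        ≠ sirP2 triangle 1 1 ![1, 0, 0] 0 1 A B t * sirP2 triangle 1 1 ![1, 0, 0] 1 2 B C t
            * sirP2 triangle 1 1 ![1, 0, 0] 0 2 A C t := by
  obtain ⟨t, htpos, hne⟩ := SIRAux.main_aux
  exact ⟨t, 1, 0, 0, htpos, fun h => hne (sub_eq_zero.mpr h)⟩
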